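/- arXiv:2312.10541 — 4 statements merged into one kernel-verified Lean document; each statement's English description precedes it below -/
import Mathlib

section
/- Let N = (κ, ν) be a mixed binomial process on a measurable space (E, 𝓔), where the counting distribution κ has finite mean c and finite variance δ². For all nonnegative measurable functions f and g on E with ν(f²) < ∞ and ν(g²) < ∞, the random variables Nf = Σ_{i=1}^K f(X_i) and Ng = Σ_{i=1}^K g(X_i) satisfy Cov(Nf, Ng) = c · ν(fg) + (δ² − c) · ν(f) · ν(g). -/
open MeasureTheory ProbabilityTheory
open scoped ENNReal NNReal

/-- The covariance of two real-valued random variables: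
`Cov(X, Y) = E[(X − E X)(Y − E Y)]`. -/
noncomputable def cov {Ω : Type*} [MeasurableSpace Ω] (X Y : Ω → ℝ) (μ : Measure Ω) : ℝ :=
  ∫ ω, (X ω - ∫ ω', X ω' ∂μ) * (Y ω - ∫ ω', Y ω' ∂μ) ∂μ

private lemma abs_mul_le_half (a b : ℝ) : |a * b| ≤ (a ^ 2 + b ^ 2) / 2 :=
  abs_le.2 ⟨by nlinarith [sq_nonneg (a + b)], by nlinarith [sq_nonneg (a - b)]⟩

private lemma integrable_mul_of_sq {α : Type*} [MeasurableSpace α] {μ : Measure α} {u v : α → ℝ}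
    (hu : AEStronglyMeasurable u μ) (hv : AEStronglyMeasurable v μ)
    (hu2 : Integrable (fun x => u x ^ 2) μ) (hv2 : Integrable (fun x => v x ^ 2) μ) :
    Integrable (fun x => u x * v x) μ := by
  refine ((hu2.add hv2).div_const 2).mono' (hu.mul hv) (Filter.Eventually.of_forall fun x => ?_)
  rw [Real.norm_eq_abs]
  exact abs_mul_le_half _ _

private lemma measurable_nat_cases {Ω γ : Type*} [MeasurableSpace Ω] [MeasurableSpace γ]
    {K : Ω → ℕ} (hK : Measurable K) {F : ℕ → Ω → γ} (hF : ∀ n, Measurable (F n)) :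
    Measurable fun ω => F (K ω) ω := by
  have h : Measurable fun p : Ω × ℕ => F p.2 p.1 :=
    measurable_from_prod_countable_left fun n => hF n
  exact h.comp (measurable_id.prodMk hK)

private lemma cov_eq_sub {Ω : Type*} [MeasurableSpace Ω] {P : Measure Ω} [IsProbabilityMeasure P]
    {X Y : Ω → ℝ} (hX : Integrable X P) (hY : Integrable Y P)
    (hXY : Integrable (fun ω => X ω * Y ω) P) :
    cov X Y P = (∫ ω, X ω * Y ω ∂P) - (∫ ω, X ω ∂P) * ∫ ω, Y ω ∂P := by
  have h1 : (fun ω => (X ω - ∫ ω', X ω' ∂P) * (Y ω - ∫ ω', Y ω' ∂P))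
      = fun ω => X ω * Y ω - ((∫ ω', X ω' ∂P) * Y ω + (∫ ω', Y ω' ∂P) * X ω
          - (∫ ω', X ω' ∂P) * ∫ ω', Y ω' ∂P) := by
    funext ω; ring
  have h2 : Integrable (fun ω => (∫ ω', X ω' ∂P) * Y ω + (∫ ω', Y ω' ∂P) * X ω) P :=
    (hY.const_mul _).add (hX.const_mul _)
  have h3 : Integrable (fun ω => (∫ ω', X ω' ∂P) * Y ω + (∫ ω', Y ω' ∂P) * X ω
      - (∫ ω', X ω' ∂P) * ∫ ω', Y ω' ∂P) P := h2.sub (integrable_const _)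
  unfold cov
  rw [h1, integral_sub hXY h3,
    integral_sub h2 (integrable_const ((∫ ω', X ω' ∂P) * ∫ ω', Y ω' ∂P)),
    integral_add (hY.const_mul _) (hX.const_mul _), integral_const_mul, integral_const_mul,
    integral_const]
  simp only [measure_univ, probReal_univ, ENNReal.toReal_one, one_smul, smul_eq_mul]
  ring

/-- For a mixed binomial process `N = (κ, ν)` with counting variable `K ~ κ`
of finite mean `c` and finite variance `δ²`, and nonnegative measurable `f, g` with
`ν(f²) < ∞` and `ν(g²) < ∞`, the random variables `Nf = ∑_{i=1}^K f(X_i)` and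
`Ng = ∑_{i=1}^K g(X_i)` satisfy `Cov(Nf, Ng) = c · ν(fg) + (δ² − c) · ν(f) · ν(g)`. -/
theorem mixedBinomial_covariance
    {Ω : Type*} [MeasurableSpace Ω] (P : Measure Ω) [IsProbabilityMeasure P]
    {E : Type*} [mE : MeasurableSpace E] (ν : Measure E) [IsProbabilityMeasure ν]
    (K : Ω → ℕ) (X : ℕ → Ω → E)
    (hK : Measurable K) (hX : ∀ i, Measurable (X i))
    -- the Xᵢ are iid with common law ν
    (hlaw : ∀ i, Measure.map (X i) P = ν)
    (hiid : iIndepFun X P)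
    -- K is independent of the sequence (Xᵢ)
    (hindep : IndepFun K (fun ω i => X i ω) P)
    -- the counting distribution κ (the law of K) has finite mean and finite variance
    (hK2 : MemLp (fun ω => (K ω : ℝ)) 2 P)
    (f g : E → ℝ) (hf : Measurable f) (hf0 : ∀ x, 0 ≤ f x)
    (hg : Measurable g) (hg0 : ∀ x, 0 ≤ g x)
    -- ν(f²) < ∞ and ν(g²) < ∞
    (hf2 : Integrable (fun x => f x ^ 2) ν)
    (hg2 : Integrable (fun x => g x ^ 2) ν) :
    cov (fun ω => ∑ i ∈ Finset.range (K ω), f (X i ω))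
        (fun ω => ∑ i ∈ Finset.range (K ω), g (X i ω)) P
      = (∫ ω, (K ω : ℝ) ∂P) * ∫ x, f x * g x ∂ν
        + (variance (fun ω => (K ω : ℝ)) P - ∫ ω, (K ω : ℝ) ∂P)
            * (∫ x, f x ∂ν) * (∫ x, g x ∂ν) := by
  classical
  have hseq : Measurable (fun ω i => X i ω) := measurable_pi_lambda _ hX
  set A : ℕ → Set Ω := fun n => K ⁻¹' {n} with hA_def
  have hA : ∀ n, MeasurableSet (A n) := fun n => hK (measurableSet_singleton n)
  have hmem : ∀ {ω n}, ω ∈ A n ↔ K ω = n := by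
    intro ω n; simp [hA_def]
  have hdisj : Pairwise (Function.onFun Disjoint A) := by
    intro m n hmn
    refine Set.disjoint_left.2 fun ω hm hn => hmn ?_
    rw [← hmem.1 hm, ← hmem.1 hn]
  have hUnion : (⋃ n, A n) = Set.univ := by
    ext ω; simp [hA_def]
  -- independence helper, Bochner version
  have key : ∀ (n : ℕ) (φ : (ℕ → E) → ℝ), Measurable φ →
      ∫ ω in A n, φ (fun i => X i ω) ∂P = (P (A n)).toReal * ∫ ω, φ (fun i => X i ω) ∂P := by
    intro n φ hφ
    set χ : ℕ → ℝ := Set.indicator ({n} : Set ℕ) (fun _ => (1:ℝ)) with hχ_def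
    have hχ : Measurable χ := measurable_const.indicator (measurableSet_singleton n)
    have hindep' : IndepFun (fun ω => χ (K ω)) (fun ω => φ (fun i => X i ω)) P :=
      hindep.comp hχ hφ
    have e1 : ∫ ω in A n, φ (fun i => X i ω) ∂P
        = ∫ ω, χ (K ω) * φ (fun i => X i ω) ∂P := by
      rw [← integral_indicator (hA n)]
      refine integral_congr_ae (Filter.Eventually.of_forall fun ω => ?_)
      by_cases h : ω ∈ A n
      · have : K ω = n := hmem.1 h
        simp [Set.indicator_of_mem h, hχ_def, this]
      · have : K ω ≠ n := fun hc => h (hmem.2 hc)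
        simp [Set.indicator_of_notMem h, hχ_def, this]
    have e2 : ∫ ω, χ (K ω) * φ (fun i => X i ω) ∂P
        = (∫ ω, χ (K ω) ∂P) * ∫ ω, φ (fun i => X i ω) ∂P :=
      hindep'.integral_mul_eq_mul_integral (hχ.comp hK).aestronglyMeasurable
        (hφ.comp hseq).aestronglyMeasurable
    have e3 : ∫ ω, χ (K ω) ∂P = (P (A n)).toReal := by
      have h4 : (fun ω => χ (K ω)) = (A n).indicator (fun _ => (1:ℝ)) := by
        funext ω
        by_cases h : ω ∈ A n
        · have : K ω = n := hmem.1 h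
          simp [Set.indicator_of_mem h, hχ_def, this]
        · have : K ω ≠ n := fun hc => h (hmem.2 hc)
          simp [Set.indicator_of_notMem h, hχ_def, this]
      rw [h4, integral_indicator_const (1:ℝ) (hA n), smul_eq_mul, mul_one, measureReal_def]
    rw [e1, e2, e3]
  -- independence helper, lintegral version
  have keyL : ∀ (n : ℕ) (φ : (ℕ → E) → ℝ≥0∞), Measurable φ →
      ∫⁻ ω in A n, φ (fun i => X i ω) ∂P = P (A n) * ∫⁻ ω, φ (fun i => X i ω) ∂P := by
    intro n φ hφ
    set χ : ℕ → ℝ≥0∞ := Set.indicator ({n} : Set ℕ) (fun _ => (1:ℝ≥0∞)) with hχ_def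
    have hχ : Measurable χ := measurable_const.indicator (measurableSet_singleton n)
    have hindep' : IndepFun (fun ω => χ (K ω)) (fun ω => φ (fun i => X i ω)) P :=
      hindep.comp hχ hφ
    have e1 : ∫⁻ ω in A n, φ (fun i => X i ω) ∂P
        = ∫⁻ ω, χ (K ω) * φ (fun i => X i ω) ∂P := by
      rw [← lintegral_indicator (hA n)]
      refine lintegral_congr fun ω => ?_
      by_cases h : ω ∈ A n
      · have : K ω = n := hmem.1 h
        simp [Set.indicator_of_mem h, hχ_def, this]
      · have : K ω ≠ n := fun hc => h (hmem.2 hc)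
        simp [Set.indicator_of_notMem h, hχ_def, this]
    have e2 : ∫⁻ ω, χ (K ω) * φ (fun i => X i ω) ∂P
        = (∫⁻ ω, χ (K ω) ∂P) * ∫⁻ ω, φ (fun i => X i ω) ∂P := by
      have := lintegral_mul_eq_lintegral_mul_lintegral_of_indepFun
        (μ := P) (f := fun ω => χ (K ω)) (g := fun ω => φ (fun i => X i ω))
        (hχ.comp hK) (hφ.comp hseq) hindep'
      simpa [Pi.mul_apply] using this
    have e3 : ∫⁻ ω, χ (K ω) ∂P = P (A n) := by
      have h4 : (fun ω => χ (K ω)) = (A n).indicator (fun _ => (1:ℝ≥0∞)) := by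
        funext ω
        by_cases h : ω ∈ A n
        · have : K ω = n := hmem.1 h
          simp [Set.indicator_of_mem h, hχ_def, this]
        · have : K ω ≠ n := fun hc => h (hmem.2 hc)
          simp [Set.indicator_of_notMem h, hχ_def, this]
      rw [h4, lintegral_indicator (hA n)]
      simp
    rw [e1, e2, e3]
  -- partition of the lintegral over the level sets of K
  have mainL : ∀ (φ : ℕ → (ℕ → E) → ℝ≥0∞), (∀ n, Measurable (φ n)) →
      ∫⁻ ω, φ (K ω) (fun i => X i ω) ∂P
        = ∑' n, P (A n) * ∫⁻ ω, φ n (fun i => X i ω) ∂P := by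
    intro φ hφ
    have h0 : ∫⁻ ω, φ (K ω) (fun i => X i ω) ∂P
        = ∫⁻ ω in ⋃ n, A n, φ (K ω) (fun i => X i ω) ∂P := by
      rw [hUnion, Measure.restrict_univ]
    rw [h0, lintegral_iUnion hA hdisj]
    refine tsum_congr fun n => ?_
    have h1 : ∫⁻ ω in A n, φ (K ω) (fun i => X i ω) ∂P
        = ∫⁻ ω in A n, φ n (fun i => X i ω) ∂P :=
      setLIntegral_congr_fun (hA n) (fun ω hω => by
        rw [hmem.1 hω])
    rw [h1, keyL n _ (hφ n)]
  -- partition of the Bochner integral over the level sets of K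
  have mainI : ∀ (φ : ℕ → (ℕ → E) → ℝ), (∀ n, Measurable (φ n)) →
      Integrable (fun ω => φ (K ω) (fun i => X i ω)) P →
      HasSum (fun n => (P (A n)).toReal * ∫ ω, φ n (fun i => X i ω) ∂P)
        (∫ ω, φ (K ω) (fun i => X i ω) ∂P) := by
    intro φ hφ hint
    have h0 := hasSum_integral_iUnion (μ := P)
      (f := fun ω => φ (K ω) (fun i => X i ω)) hA hdisj
      (by rw [hUnion]; exact hint.integrableOn)
    rw [hUnion, Measure.restrict_univ] at h0
    have he : (fun n => ∫ ω in A n, φ (K ω) (fun i => X i ω) ∂P)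
        = fun n => (P (A n)).toReal * ∫ ω, φ n (fun i => X i ω) ∂P := by
      funext n
      rw [setIntegral_congr_fun (hA n) (fun ω hω => by rw [hmem.1 hω]), key n _ (hφ n)]
    rwa [he] at h0
  -- L² facts about f∘Xᵢ and g∘Xᵢ
  have hfν : MemLp f 2 ν := (memLp_two_iff_integrable_sq hf.aestronglyMeasurable).2 hf2
  have hgν : MemLp g 2 ν := (memLp_two_iff_integrable_sq hg.aestronglyMeasurable).2 hg2
  have hfX : ∀ i, MemLp (fun ω => f (X i ω)) 2 P := fun i =>
    (memLp_map_measure_iff hf.aestronglyMeasurable (hX i).aemeasurable).1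
      (by rw [hlaw i]; exact hfν)
  have hgX : ∀ i, MemLp (fun ω => g (X i ω)) 2 P := fun i =>
    (memLp_map_measure_iff hg.aestronglyMeasurable (hX i).aemeasurable).1
      (by rw [hlaw i]; exact hgν)
  have hfXi : ∀ i, Integrable (fun ω => f (X i ω)) P := fun i => (hfX i).integrable one_le_two
  have hgXi : ∀ i, Integrable (fun ω => g (X i ω)) P := fun i => (hgX i).integrable one_le_two
  have hEf : ∀ i, ∫ ω, f (X i ω) ∂P = ∫ x, f x ∂ν := fun i => by
    rw [← hlaw i, integral_map (hX i).aemeasurable hf.aestronglyMeasurable]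
  have hEg : ∀ i, ∫ ω, g (X i ω) ∂P = ∫ x, g x ∂ν := fun i => by
    rw [← hlaw i, integral_map (hX i).aemeasurable hg.aestronglyMeasurable]
  have hνfg : Integrable (fun x => f x * g x) ν :=
    integrable_mul_of_sq hf.aestronglyMeasurable hg.aestronglyMeasurable hf2 hg2
  have hfgInt : ∀ i j, Integrable (fun ω => f (X i ω) * g (X j ω)) P := fun i j =>
    integrable_mul_of_sq (hfX i).aestronglyMeasurable (hgX j).aestronglyMeasurable
      (hfX i).integrable_sq (hgX j).integrable_sq
  have hEdiag : ∀ i, ∫ ω, f (X i ω) * g (X i ω) ∂P = ∫ x, f x * g x ∂ν := fun i => by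
    rw [← hlaw i, integral_map (f := fun x => f x * g x) (hX i).aemeasurable (hf.mul hg).aestronglyMeasurable]
  have hEoff : ∀ i j, i ≠ j →
      ∫ ω, f (X i ω) * g (X j ω) ∂P = (∫ x, f x ∂ν) * ∫ x, g x ∂ν := by
    intro i j hij
    have hind : IndepFun (fun ω => f (X i ω)) (fun ω => g (X j ω)) P :=
      (hiid.indepFun hij).comp hf hg
    rw [show ∫ ω, f (X i ω) * g (X j ω) ∂P = (∫ ω, f (X i ω) ∂P) * ∫ ω, g (X j ω) ∂P from
      hind.integral_mul_eq_mul_integral ((hf.comp (hX i)).aestronglyMeasurable)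
      ((hg.comp (hX j)).aestronglyMeasurable), hEf i, hEg j]
  -- expected values of the partial sums
  have hEφf : ∀ n : ℕ, ∫ ω, (∑ i ∈ Finset.range n, f (X i ω)) ∂P = (n : ℝ) * ∫ x, f x ∂ν := by
    intro n
    rw [integral_finset_sum _ fun i _ => hfXi i, Finset.sum_congr rfl fun i _ => hEf i]
    simp [Finset.sum_const, nsmul_eq_mul]
  have hEφg : ∀ n : ℕ, ∫ ω, (∑ i ∈ Finset.range n, g (X i ω)) ∂P = (n : ℝ) * ∫ x, g x ∂ν := by
    intro n
    rw [integral_finset_sum _ fun i _ => hgXi i, Finset.sum_congr rfl fun i _ => hEg i]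
    simp [Finset.sum_const, nsmul_eq_mul]
  have hEφfg : ∀ n : ℕ,
      ∫ ω, (∑ i ∈ Finset.range n, f (X i ω)) * ∑ j ∈ Finset.range n, g (X j ω) ∂P
        = (n : ℝ) * (∫ x, f x * g x ∂ν)
          + ((n : ℝ)^2 - (n : ℝ)) * ((∫ x, f x ∂ν) * ∫ x, g x ∂ν) := by
    intro n
    have hexp : (fun ω => (∑ i ∈ Finset.range n, f (X i ω)) * ∑ j ∈ Finset.range n, g (X j ω))
        = fun ω => ∑ i ∈ Finset.range n, ∑ j ∈ Finset.range n, f (X i ω) * g (X j ω) := by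
      funext ω; rw [Finset.sum_mul_sum]
    rw [hexp, integral_finset_sum _ fun i _ => integrable_finset_sum _ fun j _ => hfgInt i j,
      Finset.sum_congr rfl fun i _ => integral_finset_sum _ fun j _ => hfgInt i j]
    have hval : ∀ i ∈ Finset.range n, (∑ j ∈ Finset.range n, ∫ ω, f (X i ω) * g (X j ω) ∂P)
        = (n : ℝ) * ((∫ x, f x ∂ν) * ∫ x, g x ∂ν)
          + ((∫ x, f x * g x ∂ν) - (∫ x, f x ∂ν) * ∫ x, g x ∂ν) := by
      intro i hi
      have h6 : ∀ j ∈ Finset.range n, ∫ ω, f (X i ω) * g (X j ω) ∂P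
          = ((∫ x, f x ∂ν) * ∫ x, g x ∂ν)
            + (if i = j then (∫ x, f x * g x ∂ν) - (∫ x, f x ∂ν) * ∫ x, g x ∂ν else 0) := by
        intro j _
        by_cases h : i = j
        · subst h; rw [hEdiag i]; simp
        · rw [hEoff i j h]; simp [h]
      rw [Finset.sum_congr rfl h6, Finset.sum_add_distrib, Finset.sum_const, Finset.card_range,
        Finset.sum_ite_eq, if_pos hi, nsmul_eq_mul]
    rw [Finset.sum_congr rfl hval, Finset.sum_const, Finset.card_range, nsmul_eq_mul]
    ring
  -- lintegral facts
  have hmf : ∀ i, Measurable fun ω => ENNReal.ofReal (f (X i ω)) := fun i =>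
    (hf.comp (hX i)).ennreal_ofReal
  have hmg : ∀ i, Measurable fun ω => ENNReal.ofReal (g (X i ω)) := fun i =>
    (hg.comp (hX i)).ennreal_ofReal
  have hlf : ∀ i, ∫⁻ ω, ENNReal.ofReal (f (X i ω)) ∂P = ∫⁻ x, ENNReal.ofReal (f x) ∂ν :=
    fun i => by rw [← hlaw i, lintegral_map (hf.ennreal_ofReal) (hX i)]
  have hlg : ∀ i, ∫⁻ ω, ENNReal.ofReal (g (X i ω)) ∂P = ∫⁻ x, ENNReal.ofReal (g x) ∂ν :=
    fun i => by rw [← hlaw i, lintegral_map (hg.ennreal_ofReal) (hX i)]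
  have hLf : Integrable f ν := hfν.integrable one_le_two
  have hLg : Integrable g ν := hgν.integrable one_le_two
  have hCf : ∫⁻ x, ENNReal.ofReal (f x) ∂ν ≠ ⊤ := hLf.lintegral_lt_top.ne
  have hCg : ∫⁻ x, ENNReal.ofReal (g x) ∂ν ≠ ⊤ := hLg.lintegral_lt_top.ne
  have hCfg : ∫⁻ x, ENNReal.ofReal (f x * g x) ∂ν ≠ ⊤ := hνfg.lintegral_lt_top.ne
  have hK2L : ∫⁻ ω, ((K ω : ℝ≥0∞))^2 ∂P ≠ ⊤ := by
    have h2 := hK2.integrable_sq.lintegral_lt_top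
    have h3 : ∀ ω : Ω, ENNReal.ofReal ((K ω : ℝ)^2) = ((K ω : ℝ≥0∞))^2 := fun ω => by
      rw [ENNReal.ofReal_pow (by positivity), ENNReal.ofReal_natCast]
    rw [lintegral_congr h3] at h2
    exact h2.ne
  have hK2sum : ∑' n, P (A n) * ((n : ℝ≥0∞))^2 = ∫⁻ ω, ((K ω : ℝ≥0∞))^2 ∂P := by
    have h5 : ∫⁻ ω, ((K ω : ℝ≥0∞))^2 ∂P
        = ∑' n, P (A n) * ∫⁻ _ω, ((n : ℝ≥0∞))^2 ∂P :=
      mainL (fun n _ => ((n : ℝ≥0∞))^2) (fun n => measurable_const)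
    simp only [lintegral_const, measure_univ, mul_one] at h5
    exact h5.symm
  have hquad : ∀ (I : ℕ → ℝ≥0∞) (C : ℝ≥0∞), C ≠ ⊤ → (∀ n, I n ≤ (n : ℝ≥0∞) * n * C) →
      ∑' n, P (A n) * I n < ⊤ := by
    intro I C hC hI
    have h1 : ∑' n, P (A n) * I n ≤ ∑' n, C * (P (A n) * ((n : ℝ≥0∞))^2) := by
      refine ENNReal.tsum_le_tsum fun n => ?_
      calc P (A n) * I n ≤ P (A n) * ((n : ℝ≥0∞) * n * C) := mul_le_mul_right (hI n) _
        _ = C * (P (A n) * ((n : ℝ≥0∞))^2) := by ring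
    rw [ENNReal.tsum_mul_left, hK2sum] at h1
    exact lt_of_le_of_lt h1 (ENNReal.mul_lt_top hC.lt_top hK2L.lt_top)
  -- integrability of Nf and Ng
  have hNf_meas : Measurable (fun ω => ∑ i ∈ Finset.range (K ω), f (X i ω)) :=
    measurable_nat_cases hK fun n => Finset.measurable_sum _ fun i _ => hf.comp (hX i)
  have hNg_meas : Measurable (fun ω => ∑ i ∈ Finset.range (K ω), g (X i ω)) :=
    measurable_nat_cases hK fun n => Finset.measurable_sum _ fun i _ => hg.comp (hX i)
  have hNf_nonneg : ∀ ω, 0 ≤ ∑ i ∈ Finset.range (K ω), f (X i ω) := fun ω =>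
    Finset.sum_nonneg fun i _ => hf0 _
  have hNg_nonneg : ∀ ω, 0 ≤ ∑ i ∈ Finset.range (K ω), g (X i ω) := fun ω =>
    Finset.sum_nonneg fun i _ => hg0 _
  have hn_le : ∀ n : ℕ, (n : ℝ≥0∞) ≤ (n : ℝ≥0∞) * n := by
    intro n
    rcases Nat.eq_zero_or_pos n with h | h
    · simp [h]
    · exact le_mul_of_one_le_right' (by exact_mod_cast h)
  have hlsumf : ∀ n : ℕ, ∫⁻ ω, (∑ i ∈ Finset.range n, ENNReal.ofReal (f (X i ω))) ∂P
      = (n : ℝ≥0∞) * ∫⁻ x, ENNReal.ofReal (f x) ∂ν := by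
    intro n
    rw [lintegral_finset_sum _ fun i _ => hmf i,
      Finset.sum_congr rfl fun i _ => hlf i]
    simp [Finset.sum_const, nsmul_eq_mul]
  have hlsumg : ∀ n : ℕ, ∫⁻ ω, (∑ i ∈ Finset.range n, ENNReal.ofReal (g (X i ω))) ∂P
      = (n : ℝ≥0∞) * ∫⁻ x, ENNReal.ofReal (g x) ∂ν := by
    intro n
    rw [lintegral_finset_sum _ fun i _ => hmg i,
      Finset.sum_congr rfl fun i _ => hlg i]
    simp [Finset.sum_const, nsmul_eq_mul]
  have hNf_int : Integrable (fun ω => ∑ i ∈ Finset.range (K ω), f (X i ω)) P := by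
    refine ⟨hNf_meas.aestronglyMeasurable, ?_⟩
    rw [hasFiniteIntegral_iff_ofReal (Filter.Eventually.of_forall hNf_nonneg)]
    calc ∫⁻ ω, ENNReal.ofReal (∑ i ∈ Finset.range (K ω), f (X i ω)) ∂P
        = ∫⁻ ω, (∑ i ∈ Finset.range (K ω), ENNReal.ofReal (f (X i ω))) ∂P :=
          lintegral_congr fun ω => ENNReal.ofReal_sum_of_nonneg fun i _ => hf0 _
      _ = ∑' n, P (A n) * ∫⁻ ω, (∑ i ∈ Finset.range n, ENNReal.ofReal (f (X i ω))) ∂P :=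
          mainL (fun n s => ∑ i ∈ Finset.range n, ENNReal.ofReal (f (s i)))
            (fun n => Finset.measurable_sum _ fun i _ =>
              (hf.comp (measurable_pi_apply i)).ennreal_ofReal)
      _ < ⊤ := by
          refine hquad _ (∫⁻ x, ENNReal.ofReal (f x) ∂ν) hCf fun n => ?_
          rw [hlsumf n]
          exact mul_le_mul_left (hn_le n) _
  have hNg_int : Integrable (fun ω => ∑ i ∈ Finset.range (K ω), g (X i ω)) P := by
    refine ⟨hNg_meas.aestronglyMeasurable, ?_⟩
    rw [hasFiniteIntegral_iff_ofReal (Filter.Eventually.of_forall hNg_nonneg)]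
    calc ∫⁻ ω, ENNReal.ofReal (∑ i ∈ Finset.range (K ω), g (X i ω)) ∂P
        = ∫⁻ ω, (∑ i ∈ Finset.range (K ω), ENNReal.ofReal (g (X i ω))) ∂P :=
          lintegral_congr fun ω => ENNReal.ofReal_sum_of_nonneg fun i _ => hg0 _
      _ = ∑' n, P (A n) * ∫⁻ ω, (∑ i ∈ Finset.range n, ENNReal.ofReal (g (X i ω))) ∂P :=
          mainL (fun n s => ∑ i ∈ Finset.range n, ENNReal.ofReal (g (s i)))
            (fun n => Finset.measurable_sum _ fun i _ =>
              (hg.comp (measurable_pi_apply i)).ennreal_ofReal)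
      _ < ⊤ := by
          refine hquad _ (∫⁻ x, ENNReal.ofReal (g x) ∂ν) hCg fun n => ?_
          rw [hlsumg n]
          exact mul_le_mul_left (hn_le n) _
  -- integrability of the product Nf * Ng
  have hterm : ∀ i j, ∫⁻ ω, ENNReal.ofReal (f (X i ω)) * ENNReal.ofReal (g (X j ω)) ∂P
      ≤ (∫⁻ x, ENNReal.ofReal (f x * g x) ∂ν)
        + (∫⁻ x, ENNReal.ofReal (f x) ∂ν) * ∫⁻ x, ENNReal.ofReal (g x) ∂ν := by
    intro i j
    by_cases h : i = j
    · subst h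
      have he : ∀ ω : Ω, ENNReal.ofReal (f (X i ω)) * ENNReal.ofReal (g (X i ω))
          = ENNReal.ofReal (f (X i ω) * g (X i ω)) := fun ω => (ENNReal.ofReal_mul (hf0 _)).symm
      rw [lintegral_congr he]
      have h7 : ∫⁻ ω, ENNReal.ofReal (f (X i ω) * g (X i ω)) ∂P
          = ∫⁻ x, ENNReal.ofReal (f x * g x) ∂ν := by
        rw [← hlaw i, lintegral_map (f := fun x => ENNReal.ofReal (f x * g x)) ((hf.mul hg).ennreal_ofReal) (hX i)]
      rw [h7]
      exact le_self_add
    · have hind : IndepFun (fun ω => ENNReal.ofReal (f (X i ω)))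
          (fun ω => ENNReal.ofReal (g (X j ω))) P :=
        (hiid.indepFun h).comp (hf.ennreal_ofReal)
          (hg.ennreal_ofReal)
      have h8 := lintegral_mul_eq_lintegral_mul_lintegral_of_indepFun
        (μ := P) (f := fun ω => ENNReal.ofReal (f (X i ω)))
        (g := fun ω => ENNReal.ofReal (g (X j ω)))
        (hmf i)
        (hmg j) hind
      simp only [Pi.mul_apply] at h8
      rw [h8, hlf i, hlg j]
      exact le_add_self
  have hlprod_le : ∀ n : ℕ, ∫⁻ ω, (∑ i ∈ Finset.range n, ENNReal.ofReal (f (X i ω)))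
        * (∑ j ∈ Finset.range n, ENNReal.ofReal (g (X j ω))) ∂P
      ≤ (n : ℝ≥0∞) * n * ((∫⁻ x, ENNReal.ofReal (f x * g x) ∂ν)
        + (∫⁻ x, ENNReal.ofReal (f x) ∂ν) * ∫⁻ x, ENNReal.ofReal (g x) ∂ν) := by
    intro n
    calc ∫⁻ ω, (∑ i ∈ Finset.range n, ENNReal.ofReal (f (X i ω)))
          * (∑ j ∈ Finset.range n, ENNReal.ofReal (g (X j ω))) ∂P
        = ∫⁻ ω, ∑ i ∈ Finset.range n, ∑ j ∈ Finset.range n,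
            ENNReal.ofReal (f (X i ω)) * ENNReal.ofReal (g (X j ω)) ∂P :=
          lintegral_congr fun ω => by rw [Finset.sum_mul_sum]
      _ = ∑ i ∈ Finset.range n, ∫⁻ ω, ∑ j ∈ Finset.range n,
            ENNReal.ofReal (f (X i ω)) * ENNReal.ofReal (g (X j ω)) ∂P :=
          lintegral_finset_sum _ fun i _ => Finset.measurable_sum _ fun j _ =>
            (hmf i).mul
              (hmg j)
      _ = ∑ i ∈ Finset.range n, ∑ j ∈ Finset.range n,
            ∫⁻ ω, ENNReal.ofReal (f (X i ω)) * ENNReal.ofReal (g (X j ω)) ∂P :=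
          Finset.sum_congr rfl fun i _ => lintegral_finset_sum _ fun j _ =>
            (hmf i).mul
              (hmg j)
      _ ≤ ∑ _i ∈ Finset.range n, ∑ _j ∈ Finset.range n,
            ((∫⁻ x, ENNReal.ofReal (f x * g x) ∂ν)
              + (∫⁻ x, ENNReal.ofReal (f x) ∂ν) * ∫⁻ x, ENNReal.ofReal (g x) ∂ν) :=
          Finset.sum_le_sum fun i _ => Finset.sum_le_sum fun j _ => hterm i j
      _ = (n : ℝ≥0∞) * n * ((∫⁻ x, ENNReal.ofReal (f x * g x) ∂ν)
            + (∫⁻ x, ENNReal.ofReal (f x) ∂ν) * ∫⁻ x, ENNReal.ofReal (g x) ∂ν) := by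
          simp only [Finset.sum_const, Finset.card_range, nsmul_eq_mul]
          ring
  have hNfNg_int : Integrable (fun ω => (∑ i ∈ Finset.range (K ω), f (X i ω))
      * ∑ j ∈ Finset.range (K ω), g (X j ω)) P := by
    refine ⟨(hNf_meas.mul hNg_meas).aestronglyMeasurable, ?_⟩
    rw [hasFiniteIntegral_iff_ofReal (Filter.Eventually.of_forall fun ω =>
      mul_nonneg (hNf_nonneg ω) (hNg_nonneg ω))]
    calc ∫⁻ ω, ENNReal.ofReal ((∑ i ∈ Finset.range (K ω), f (X i ω))
            * ∑ j ∈ Finset.range (K ω), g (X j ω)) ∂P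
        = ∫⁻ ω, (∑ i ∈ Finset.range (K ω), ENNReal.ofReal (f (X i ω)))
            * (∑ j ∈ Finset.range (K ω), ENNReal.ofReal (g (X j ω))) ∂P :=
          lintegral_congr fun ω => by
            rw [ENNReal.ofReal_mul (hNf_nonneg ω),
              ENNReal.ofReal_sum_of_nonneg fun i _ => hf0 _,
              ENNReal.ofReal_sum_of_nonneg fun j _ => hg0 _]
      _ = ∑' n, P (A n) * ∫⁻ ω, (∑ i ∈ Finset.range n, ENNReal.ofReal (f (X i ω)))
            * (∑ j ∈ Finset.range n, ENNReal.ofReal (g (X j ω))) ∂P :=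
          mainL (fun n s => (∑ i ∈ Finset.range n, ENNReal.ofReal (f (s i)))
              * (∑ j ∈ Finset.range n, ENNReal.ofReal (g (s j))))
            (fun n => (Finset.measurable_sum _ fun i _ =>
                (hf.comp (measurable_pi_apply i)).ennreal_ofReal).mul
              (Finset.measurable_sum _ fun j _ =>
                (hg.comp (measurable_pi_apply j)).ennreal_ofReal))
      _ < ⊤ := by
          refine hquad _ _ ?_ hlprod_le
          exact (ENNReal.add_lt_top.2 ⟨hCfg.lt_top,
            ENNReal.mul_lt_top hCf.lt_top hCg.lt_top⟩).ne
  -- HasSum identities from the partition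
  have hSK : HasSum (fun n => (P (A n)).toReal * ∫ _ω, (n : ℝ) ∂P) (∫ ω, (K ω : ℝ) ∂P) :=
    mainI (fun n _ => (n : ℝ)) (fun n => measurable_const) (hK2.integrable one_le_two)
  simp only [integral_const, measure_univ, probReal_univ, ENNReal.toReal_one, smul_eq_mul, one_mul] at hSK
  have hSK2 : HasSum (fun n => (P (A n)).toReal * ∫ _ω, ((n : ℝ))^2 ∂P)
      (∫ ω, ((K ω : ℝ))^2 ∂P) :=
    mainI (fun n _ => ((n : ℝ))^2) (fun n => measurable_const) hK2.integrable_sq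
  simp only [integral_const, measure_univ, probReal_univ, ENNReal.toReal_one, smul_eq_mul, one_mul] at hSK2
  have hSf : HasSum (fun n => (P (A n)).toReal * ∫ ω, (∑ i ∈ Finset.range n, f (X i ω)) ∂P)
      (∫ ω, (∑ i ∈ Finset.range (K ω), f (X i ω)) ∂P) :=
    mainI (fun n s => ∑ i ∈ Finset.range n, f (s i))
      (fun n => Finset.measurable_sum _ fun i _ => hf.comp (measurable_pi_apply i)) hNf_int
  simp only [hEφf] at hSf
  have hSg : HasSum (fun n => (P (A n)).toReal * ∫ ω, (∑ i ∈ Finset.range n, g (X i ω)) ∂P)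
      (∫ ω, (∑ i ∈ Finset.range (K ω), g (X i ω)) ∂P) :=
    mainI (fun n s => ∑ i ∈ Finset.range n, g (s i))
      (fun n => Finset.measurable_sum _ fun i _ => hg.comp (measurable_pi_apply i)) hNg_int
  simp only [hEφg] at hSg
  have hSfg : HasSum (fun n => (P (A n)).toReal
        * ∫ ω, (∑ i ∈ Finset.range n, f (X i ω)) * ∑ j ∈ Finset.range n, g (X j ω) ∂P)
      (∫ ω, (∑ i ∈ Finset.range (K ω), f (X i ω)) * ∑ j ∈ Finset.range (K ω), g (X j ω) ∂P) :=
    mainI (fun n s => (∑ i ∈ Finset.range n, f (s i)) * ∑ j ∈ Finset.range n, g (s j))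
      (fun n => (Finset.measurable_sum _ fun i _ => hf.comp (measurable_pi_apply i)).mul
        (Finset.measurable_sum _ fun j _ => hg.comp (measurable_pi_apply j))) hNfNg_int
  simp only [hEφfg] at hSfg
  -- identify the integrals
  have hENf : ∫ ω, (∑ i ∈ Finset.range (K ω), f (X i ω)) ∂P
      = (∫ ω, (K ω : ℝ) ∂P) * ∫ x, f x ∂ν := by
    refine hSf.unique ?_
    have h9 := hSK.mul_right (∫ x, f x ∂ν)
    simpa only [mul_assoc] using h9
  have hENg : ∫ ω, (∑ i ∈ Finset.range (K ω), g (X i ω)) ∂P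
      = (∫ ω, (K ω : ℝ) ∂P) * ∫ x, g x ∂ν := by
    refine hSg.unique ?_
    have h9 := hSK.mul_right (∫ x, g x ∂ν)
    simpa only [mul_assoc] using h9
  have hENfNg : ∫ ω, (∑ i ∈ Finset.range (K ω), f (X i ω))
        * ∑ j ∈ Finset.range (K ω), g (X j ω) ∂P
      = (∫ ω, (K ω : ℝ) ∂P) * ∫ x, f x * g x ∂ν
        + ((∫ ω, ((K ω : ℝ))^2 ∂P) - ∫ ω, (K ω : ℝ) ∂P)
          * ((∫ x, f x ∂ν) * ∫ x, g x ∂ν) := by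
    refine hSfg.unique ?_
    have h1 := hSK.mul_right (∫ x, f x * g x ∂ν)
    have h2 := (hSK2.sub hSK).mul_right ((∫ x, f x ∂ν) * ∫ x, g x ∂ν)
    have h3 := h1.add h2
    have hfun : (fun n : ℕ => (P (A n)).toReal * (n : ℝ) * ∫ x, f x * g x ∂ν
          + ((P (A n)).toReal * ((n : ℝ))^2 - (P (A n)).toReal * (n : ℝ))
            * ((∫ x, f x ∂ν) * ∫ x, g x ∂ν))
        = fun n : ℕ => (P (A n)).toReal * ((n : ℝ) * ∫ x, f x * g x ∂ν
          + (((n : ℝ))^2 - (n : ℝ)) * ((∫ x, f x ∂ν) * ∫ x, g x ∂ν)) := by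
      funext n; ring
    rwa [hfun] at h3
  -- conclusion
  rw [cov_eq_sub hNf_int hNg_int hNfNg_int]
  rw [hENfNg, hENf, hENg, variance_eq_sub hK2]
  simp only [Pi.pow_apply]
  ring
end

section
/- Let N = (κ, ν) be a mixed binomial process on a measurable space (E, 𝓔), where the counting distribution κ has finite mean c and finite variance δ². For all disjoint measurable sets A and B in 𝓔, the counting variables N(A) = Σ_{i=1}^K 1_A(X_i) and N(B) = Σ_{i=1}^K 1_B(X_i) satisfy Cov(N(A), N(B)) = (δ² − c) · ν(A) · ν(B). -/
open MeasureTheory ProbabilityTheory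

lemma cov_eq_integral_mul_sub {Ω : Type*} [MeasurableSpace Ω] (P : Measure Ω)
    [IsProbabilityMeasure P] {X Y : Ω → ℝ} (hX : Integrable X P) (hY : Integrable Y P)
    (hXY : Integrable (fun ω => X ω * Y ω) P) :
    cov X Y P = (∫ ω, X ω * Y ω ∂P) - (∫ ω, X ω ∂P) * (∫ ω, Y ω ∂P) := by
  unfold cov
  have h : ∀ ω, (X ω - ∫ ω', X ω' ∂P) * (Y ω - ∫ ω', Y ω' ∂P)
      = X ω * Y ω - ((∫ ω', X ω' ∂P) * Y ω + (∫ ω', Y ω' ∂P) * X ω)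
        + (∫ ω', X ω' ∂P) * (∫ ω', Y ω' ∂P) := fun ω => by ring
  simp_rw [h]
  have e1 : Integrable (fun ω => (∫ ω', X ω' ∂P) * Y ω + (∫ ω', Y ω' ∂P) * X ω) P :=
    (hY.const_mul _).add (hX.const_mul _)
  have e0 : Integrable (fun ω => X ω * Y ω
      - ((∫ ω', X ω' ∂P) * Y ω + (∫ ω', Y ω' ∂P) * X ω)) P := hXY.sub e1
  have e2 : Integrable (fun ω => (∫ ω', X ω' ∂P) * Y ω) P := hY.const_mul _
  have e3 : Integrable (fun ω => (∫ ω', Y ω' ∂P) * X ω) P := hX.const_mul _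
  rw [integral_add e0 (integrable_const _), integral_sub hXY e1,
    integral_add e2 e3, integral_const_mul, integral_const_mul, integral_const]
  simp only [probReal_univ, smul_eq_mul, one_mul]
  ring

/-- Fubini-type identity for a pair of independent random variables, one of them `ℕ`-valued. -/
lemma indep_fubini {Ω : Type*} [MeasurableSpace Ω] (P : Measure Ω) [IsProbabilityMeasure P]
    {β : Type*} [MeasurableSpace β]
    {K : Ω → ℕ} {Y : Ω → β} (hK : Measurable K) (hY : Measurable Y)
    (hindep : IndepFun K Y P)
    {F : ℕ × β → ℝ} (hF : Measurable F)
    (hint : Integrable (fun ω => F (K ω, Y ω)) P)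
    {g : ℕ → ℝ} (hg : ∀ n, ∫ ω', F (n, Y ω') ∂P = g n) :
    ∫ ω, F (K ω, Y ω) ∂P = ∫ ω, g (K ω) ∂P := by
  have hpair : Measurable (fun ω => (K ω, Y ω)) := hK.prodMk hY
  have hmap : P.map (fun ω => (K ω, Y ω)) = (P.map K).prod (P.map Y) :=
    (indepFun_iff_map_prod_eq_prod_map_map hK.aemeasurable hY.aemeasurable).1 hindep
  have hFint : Integrable F ((P.map K).prod (P.map Y)) := by
    rw [← hmap]
    exact (integrable_map_measure hF.aestronglyMeasurable hpair.aemeasurable).2 hint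
  have h1 : ∫ ω, F (K ω, Y ω) ∂P = ∫ p, F p ∂((P.map K).prod (P.map Y)) := by
    rw [← hmap, integral_map hpair.aemeasurable hF.aestronglyMeasurable]
  rw [h1, MeasureTheory.integral_prod _ hFint]
  have h2 : ∀ n, ∫ y, F (n, y) ∂(P.map Y) = g n := fun n => by
    have hm : Measurable fun y : β => F (n, y) := hF.comp measurable_prodMk_left
    rw [integral_map hY.aemeasurable hm.aestronglyMeasurable]
    exact hg n
  simp_rw [h2]
  exact integral_map hK.aemeasurable (Measurable.of_discrete).aestronglyMeasurable

/-- For a mixed binomial process `N = (κ, ν)` with counting variable `K ~ κ`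
of finite mean `c` and finite variance `δ²`, and disjoint measurable sets `A, B`, the counting
variables `N(A) = ∑_{i=1}^K 1_A(X_i)` and `N(B) = ∑_{i=1}^K 1_B(X_i)` satisfy
`Cov(N(A), N(B)) = (δ² − c) · ν(A) · ν(B)`. -/
theorem mixedBinomial_covariance_disjoint_sets
    {Ω : Type*} [MeasurableSpace Ω] (P : Measure Ω) [IsProbabilityMeasure P]
    {E : Type*} [mE : MeasurableSpace E] (ν : Measure E) [IsProbabilityMeasure ν]
    (K : Ω → ℕ) (X : ℕ → Ω → E)
    (hK : Measurable K) (hX : ∀ i, Measurable (X i))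
    -- the Xᵢ are iid with common law ν
    (hlaw : ∀ i, Measure.map (X i) P = ν)
    (hiid : iIndepFun X P)
    -- K is independent of the sequence (Xᵢ)
    (hindep : IndepFun K (fun ω i => X i ω) P)
    -- the counting distribution κ (the law of K) has finite mean and finite variance
    (hK2 : MemLp (fun ω => (K ω : ℝ)) 2 P)
    (A B : Set E) (hA : MeasurableSet A) (hB : MeasurableSet B)
    (hAB : Disjoint A B) :
    cov (fun ω => ∑ i ∈ Finset.range (K ω), A.indicator (1 : E → ℝ) (X i ω))
        (fun ω => ∑ i ∈ Finset.range (K ω), B.indicator (1 : E → ℝ) (X i ω)) P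
      = (variance (fun ω => (K ω : ℝ)) P - ∫ ω, (K ω : ℝ) ∂P)
          * (ν A).toReal * (ν B).toReal := by
  set f : E → ℝ := A.indicator (1 : E → ℝ) with hf_def
  set g : E → ℝ := B.indicator (1 : E → ℝ) with hg_def
  have hf : Measurable f := measurable_one.indicator hA
  have hg : Measurable g := measurable_one.indicator hB
  have hf0 : ∀ x, 0 ≤ f x := fun x => Set.indicator_nonneg (fun _ _ => zero_le_one) x
  have hg0 : ∀ x, 0 ≤ g x := fun x => Set.indicator_nonneg (fun _ _ => zero_le_one) x
  have hf1 : ∀ x, f x ≤ 1 := fun x => Set.indicator_le_self' (fun _ _ => zero_le_one) x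
  have hg1 : ∀ x, g x ≤ 1 := fun x => Set.indicator_le_self' (fun _ _ => zero_le_one) x
  set a : ℝ := (ν A).toReal with ha_def
  set b : ℝ := (ν B).toReal with hb_def
  set Y : Ω → (ℕ → E) := fun ω i => X i ω with hY_def
  have hY : Measurable Y := measurable_pi_lambda _ hX
  -- the two summation functionals
  set FA : ℕ × (ℕ → E) → ℝ := fun p => ∑ i ∈ Finset.range p.1, f (p.2 i) with hFA_def
  set FB : ℕ × (ℕ → E) → ℝ := fun p => ∑ i ∈ Finset.range p.1, g (p.2 i) with hFB_def
  have hFA : Measurable FA := by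
    have h : Measurable (fun q : (ℕ → E) × ℕ => ∑ i ∈ Finset.range q.2, f (q.1 i)) := by
      refine measurable_from_prod_countable_left fun n => ?_
      show Measurable fun y : ℕ → E => ∑ i ∈ Finset.range n, f (y i)
      exact Finset.measurable_sum _ fun i _ => hf.comp (measurable_pi_apply i)
    exact h.comp measurable_swap
  have hFB : Measurable FB := by
    have h : Measurable (fun q : (ℕ → E) × ℕ => ∑ i ∈ Finset.range q.2, g (q.1 i)) := by
      refine measurable_from_prod_countable_left fun n => ?_
      show Measurable fun y : ℕ → E => ∑ i ∈ Finset.range n, g (y i)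
      exact Finset.measurable_sum _ fun i _ => hg.comp (measurable_pi_apply i)
    exact h.comp measurable_swap
  -- the counting variables
  have hNA_meas : Measurable (fun ω => FA (K ω, Y ω)) := hFA.comp (hK.prodMk hY)
  have hNB_meas : Measurable (fun ω => FB (K ω, Y ω)) := hFB.comp (hK.prodMk hY)
  -- L² bounds
  have hNA2 : MemLp (fun ω => FA (K ω, Y ω)) 2 P := by
    refine hK2.of_le hNA_meas.aestronglyMeasurable ?_
    filter_upwards with ω
    have h0 : 0 ≤ FA (K ω, Y ω) := Finset.sum_nonneg fun i _ => hf0 _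
    have h1 : FA (K ω, Y ω) ≤ (K ω : ℝ) := by
      calc FA (K ω, Y ω) ≤ ∑ _i ∈ Finset.range (K ω), (1 : ℝ) :=
            Finset.sum_le_sum fun i _ => hf1 _
        _ = (K ω : ℝ) := by simp
    rw [Real.norm_eq_abs, Real.norm_eq_abs, abs_of_nonneg h0, abs_of_nonneg (by positivity)]
    exact h1
  have hNB2 : MemLp (fun ω => FB (K ω, Y ω)) 2 P := by
    refine hK2.of_le hNB_meas.aestronglyMeasurable ?_
    filter_upwards with ω
    have h0 : 0 ≤ FB (K ω, Y ω) := Finset.sum_nonneg fun i _ => hg0 _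
    have h1 : FB (K ω, Y ω) ≤ (K ω : ℝ) := by
      calc FB (K ω, Y ω) ≤ ∑ _i ∈ Finset.range (K ω), (1 : ℝ) :=
            Finset.sum_le_sum fun i _ => hg1 _
        _ = (K ω : ℝ) := by simp
    rw [Real.norm_eq_abs, Real.norm_eq_abs, abs_of_nonneg h0, abs_of_nonneg (by positivity)]
    exact h1
  have hNA_int : Integrable (fun ω => FA (K ω, Y ω)) P := hNA2.integrable one_le_two
  have hNB_int : Integrable (fun ω => FB (K ω, Y ω)) P := hNB2.integrable one_le_two
  have hprod2 : MemLp ((fun ω => FA (K ω, Y ω)) • (fun ω => FB (K ω, Y ω))) 1 P :=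
    hNB2.smul hNA2
  have hprod_int : Integrable (fun ω => FA (K ω, Y ω) * FB (K ω, Y ω)) P := by
    have := hprod2.integrable le_rfl
    simpa [Pi.smul_apply, smul_eq_mul, Pi.mul_def] using this
  -- individual integrals of f ∘ X i etc.
  have hfXint : ∀ i, Integrable (fun ω => f (X i ω)) P := by
    intro i
    refine Integrable.mono' (integrable_const 1) (hf.comp (hX i)).aestronglyMeasurable ?_
    filter_upwards with ω
    rw [Real.norm_eq_abs, abs_of_nonneg (hf0 _)]
    exact hf1 _
  have hgXint : ∀ i, Integrable (fun ω => g (X i ω)) P := by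
    intro i
    refine Integrable.mono' (integrable_const 1) (hg.comp (hX i)).aestronglyMeasurable ?_
    filter_upwards with ω
    rw [Real.norm_eq_abs, abs_of_nonneg (hg0 _)]
    exact hg1 _
  have hfX : ∀ i, ∫ ω, f (X i ω) ∂P = a := fun i => by
    rw [← integral_map (hX i).aemeasurable hf.aestronglyMeasurable, hlaw i, hf_def,
      integral_indicator_one hA]
    rfl
  have hgX : ∀ i, ∫ ω, g (X i ω) ∂P = b := fun i => by
    rw [← integral_map (hX i).aemeasurable hg.aestronglyMeasurable, hlaw i, hg_def,
      integral_indicator_one hB]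
    rfl
  -- first moments
  have hEA : ∫ ω, FA (K ω, Y ω) ∂P = ∫ ω, (K ω : ℝ) * a ∂P := by
    refine indep_fubini P hK hY hindep hFA hNA_int (g := fun n => (n : ℝ) * a) ?_
    intro n
    rw [show (fun ω' => FA (n, Y ω')) = fun ω' => ∑ i ∈ Finset.range n, f (X i ω') from rfl,
      integral_finset_sum _ fun i _ => hfXint i]
    simp [hfX]
  have hEB : ∫ ω, FB (K ω, Y ω) ∂P = ∫ ω, (K ω : ℝ) * b ∂P := by
    refine indep_fubini P hK hY hindep hFB hNB_int (g := fun n => (n : ℝ) * b) ?_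
    intro n
    rw [show (fun ω' => FB (n, Y ω')) = fun ω' => ∑ i ∈ Finset.range n, g (X i ω') from rfl,
      integral_finset_sum _ fun i _ => hgXint i]
    simp [hgX]
  -- cross terms
  have hfg0 : ∀ x, f x * g x = 0 := by
    intro x
    by_cases hx : x ∈ A
    · have : x ∉ B := Set.disjoint_left.1 hAB hx
      simp [hf_def, hg_def, Set.indicator_of_notMem this]
    · simp [hf_def, Set.indicator_of_notMem hx]
  have hterm : ∀ i j : ℕ, ∫ ω, f (X i ω) * g (X j ω) ∂P = if i = j then 0 else a * b := by
    intro i j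
    by_cases hij : i = j
    · subst hij
      simp [hfg0]
    · rw [if_neg hij]
      have hIJ : IndepFun (X i) (X j) P := hiid.indepFun hij
      have : IndepFun (f ∘ X i) (g ∘ X j) P := hIJ.comp hf hg
      have := this.integral_mul_eq_mul_integral ((hf.comp (hX i)).aestronglyMeasurable)
        ((hg.comp (hX j)).aestronglyMeasurable)
      calc ∫ ω, f (X i ω) * g (X j ω) ∂P = ∫ ω, ((f ∘ X i) * (g ∘ X j)) ω ∂P := rfl
        _ = (∫ ω, f (X i ω) ∂P) * ∫ ω, g (X j ω) ∂P := this
        _ = a * b := by rw [hfX, hgX]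
  have htermint : ∀ i j : ℕ, Integrable (fun ω => f (X i ω) * g (X j ω)) P := by
    intro i j
    refine Integrable.mono' (integrable_const 1)
      (((hf.comp (hX i)).mul (hg.comp (hX j))).aestronglyMeasurable) ?_
    filter_upwards with ω
    rw [Real.norm_eq_abs, abs_of_nonneg (mul_nonneg (hf0 _) (hg0 _))]
    exact mul_le_one₀ (hf1 _) (hg0 _) (hg1 _)
  -- second mixed moment
  have hEAB : ∫ ω, FA (K ω, Y ω) * FB (K ω, Y ω) ∂P
      = ∫ ω, ((K ω : ℝ) ^ 2 - (K ω : ℝ)) * (a * b) ∂P := by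
    refine indep_fubini P hK hY hindep (F := fun p => FA p * FB p) (hFA.mul hFB)
      hprod_int (g := fun n => ((n : ℝ) ^ 2 - (n : ℝ)) * (a * b)) ?_
    intro n
    have hexp : (fun ω' => FA (n, Y ω') * FB (n, Y ω'))
        = fun ω' => ∑ i ∈ Finset.range n, ∑ j ∈ Finset.range n, f (X i ω') * g (X j ω') := by
      funext ω'
      exact Finset.sum_mul_sum _ _ _ _
    show ∫ ω', FA (n, Y ω') * FB (n, Y ω') ∂P = ((n : ℝ) ^ 2 - (n : ℝ)) * (a * b)
    rw [hexp, integral_finset_sum _ fun i _ => integrable_finset_sum _ fun j _ => htermint i j]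
    have hrow : ∀ i ∈ Finset.range n,
        (∫ ω, ∑ j ∈ Finset.range n, f (X i ω) * g (X j ω) ∂P) = (n : ℝ) * (a * b) - a * b := by
      intro i hi
      rw [integral_finset_sum _ fun j _ => htermint i j]
      simp_rw [hterm i]
      have h1 : ∀ j : ℕ, (if i = j then (0 : ℝ) else a * b)
          = a * b - (if i = j then a * b else 0) := by
        intro j; split <;> ring
      simp_rw [h1]
      rw [Finset.sum_sub_distrib, Finset.sum_const, Finset.sum_ite_eq, if_pos hi,
        Finset.card_range, nsmul_eq_mul]
    rw [Finset.sum_congr rfl hrow, Finset.sum_const, Finset.card_range, nsmul_eq_mul]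
    ring
  -- put everything together
  have hcov := cov_eq_integral_mul_sub P hNA_int hNB_int hprod_int
  have hKint : Integrable (fun ω => (K ω : ℝ)) P := hK2.integrable one_le_two
  have hK2int : Integrable (fun ω => (K ω : ℝ) ^ 2) P := hK2.integrable_sq
  have hvar : variance (fun ω => (K ω : ℝ)) P
      = (∫ ω, (K ω : ℝ) ^ 2 ∂P) - (∫ ω, (K ω : ℝ) ∂P) ^ 2 := by
    rw [variance_eq_sub hK2]
    congr 1
  show cov (fun ω => FA (K ω, Y ω)) (fun ω => FB (K ω, Y ω)) P = _
  rw [hcov, hEA, hEB, hEAB, integral_mul_const, integral_mul_const, integral_mul_const,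
    integral_sub hK2int hKint, hvar]
  ring
end

section
/- Let N = (κ, ν) be a binomial process on a measurable space (E, 𝓔), i.e., a mixed binomial process whose counting distribution is the Dirac measure at n ∈ ℕ with n ≥ 1 (so K = n almost surely, c = n, δ² = 0). Let f be a nonnegative measurable function with ν(f²) < ∞ and Var_ν(f) = ν(f²) − (ν(f))² > 0, and let P be a finite measurable partition of E containing at least two elements D with ν(f·1_D) > 0. Then: (i) for each D ∈ P, Var(N(f·1_D)) / Var(Nf) = Var_ν(f·1_D) / Var_ν(f); (ii) 𝕊ᵃ = Σ_{D ∈ P} Var(N(f·1_D)) / Var(Nf) > 1; and (iii) 𝕊ᵇ = Σ_{D ∈ P} Σ_{D' ∈ P, D' ≠ D} ( −ν(f·1_D)·ν(f·1_{D'}) ) / Var_ν(f) < 0. -/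
open MeasureTheory ProbabilityTheory
open scoped Classical

/-- For a binomial process `N = (Dirac n, ν)` (a mixed binomial process
whose counting variable is the constant `n ≥ 1`, so `c = n`, `δ² = 0`), a nonnegative
measurable `f` with `ν(f²) < ∞` and `Var_ν(f) = ν(f²) − (ν f)² > 0`, and a finite
measurable partition `Pp` of `E` containing at least two elements `D` with `ν(f·1_D) > 0`:
(i) for each `D ∈ Pp`, `Var(N(f·1_D))/Var(Nf) = Var_ν(f·1_D)/Var_ν(f)`;
(ii) `𝕊ᵃ = ∑_{D ∈ Pp} Var(N(f·1_D))/Var(Nf) > 1`;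
(iii) `𝕊ᵇ = ∑_{D ∈ Pp} ∑_{D' ≠ D} (−ν(f·1_D)·ν(f·1_{D'}))/Var_ν(f) < 0`. -/
theorem binomialProcess_sensitivity_indices
    {Ω : Type*} [MeasurableSpace Ω] (P : Measure Ω) [IsProbabilityMeasure P]
    {E : Type*} [mE : MeasurableSpace E] (ν : Measure E) [IsProbabilityMeasure ν]
    (n : ℕ) (hn : 1 ≤ n) (X : ℕ → Ω → E)
    (hX : ∀ i, Measurable (X i))
    -- the Xᵢ are iid with common law ν (the counting variable is the constant n)
    (hlaw : ∀ i, Measure.map (X i) P = ν)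
    (hiid : iIndepFun X P)
    (f : E → ℝ) (hf : Measurable f) (hf0 : ∀ x, 0 ≤ f x)
    -- ν(f²) < ∞
    (hf2 : Integrable (fun x => f x ^ 2) ν)
    -- Var_ν(f) > 0
    (hvarf : 0 < (∫ x, f x ^ 2 ∂ν) - (∫ x, f x ∂ν) ^ 2)
    -- Pp is a finite measurable partition of E into pairwise disjoint sets
    (Pp : Finset (Set E)) (hPmeas : ∀ D ∈ Pp, MeasurableSet D)
    (hPdisj : ∀ D ∈ Pp, ∀ D' ∈ Pp, D ≠ D' → Disjoint D D')
    (hPcover : ⋃ D ∈ Pp, D = Set.univ)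
    -- at least two elements of the partition with ν(f·1_D) > 0
    (htwo : ∃ D₁ ∈ Pp, ∃ D₂ ∈ Pp, D₁ ≠ D₂ ∧
      0 < ∫ x, D₁.indicator f x ∂ν ∧ 0 < ∫ x, D₂.indicator f x ∂ν) :
    (∀ D ∈ Pp,
        variance (fun ω => ∑ i ∈ Finset.range n, D.indicator f (X i ω)) P
            / variance (fun ω => ∑ i ∈ Finset.range n, f (X i ω)) P
          = ((∫ x, D.indicator (fun y => f y ^ 2) x ∂ν) - (∫ x, D.indicator f x ∂ν) ^ 2)
            / ((∫ x, f x ^ 2 ∂ν) - (∫ x, f x ∂ν) ^ 2))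
    ∧ 1 < ∑ D ∈ Pp,
        variance (fun ω => ∑ i ∈ Finset.range n, D.indicator f (X i ω)) P
          / variance (fun ω => ∑ i ∈ Finset.range n, f (X i ω)) P
    ∧ (∑ D ∈ Pp, ∑ D' ∈ Pp.erase D,
          (-(∫ x, D.indicator f x ∂ν) * ∫ x, D'.indicator f x ∂ν)
            / ((∫ x, f x ^ 2 ∂ν) - (∫ x, f x ∂ν) ^ 2)) < 0 := by
  have hmem2 : MemLp f 2 ν :=
    (memLp_two_iff_integrable_sq hf.aestronglyMeasurable).mpr hf2
  have hfi : Integrable f ν := hmem2.integrable one_le_two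
  -- generic variance computation for i.i.d. sums
  have hvar : ∀ g : E → ℝ, Measurable g → MemLp g 2 ν →
      variance (fun ω => ∑ i ∈ Finset.range n, g (X i ω)) P
        = (n : ℝ) * ((∫ x, g x ^ 2 ∂ν) - (∫ x, g x ∂ν) ^ 2) := by
    intro g hg hg2
    have hmp : ∀ i, MeasurePreserving (X i) P ν := fun i => ⟨hX i, hlaw i⟩
    have hgP : ∀ i, MemLp (fun ω => g (X i ω)) 2 P := fun i =>
      hg2.comp_measurePreserving (hmp i)
    have hint : ∀ i, (∫ ω, g (X i ω) ∂P) = ∫ x, g x ∂ν := by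
      intro i
      rw [← hlaw i, integral_map (hX i).aemeasurable]
      rw [hlaw i]; exact hg.aestronglyMeasurable
    have hint2 : ∀ i, (∫ ω, g (X i ω) ^ 2 ∂P) = ∫ x, g x ^ 2 ∂ν := by
      intro i
      rw [← hlaw i, integral_map (hX i).aemeasurable]
      rw [hlaw i]; exact (hg.pow_const 2).aestronglyMeasurable
    have hfun : (fun ω => ∑ i ∈ Finset.range n, g (X i ω))
        = ∑ i ∈ Finset.range n, (fun ω => g (X i ω)) := by
      ext ω; simp
    rw [hfun, IndepFun.variance_sum (fun i _ => hgP i)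
      (fun i _ j _ hij => (hiid.indepFun hij).comp hg hg)]
    have : ∀ i ∈ Finset.range n, variance (fun ω => g (X i ω)) P
        = (∫ x, g x ^ 2 ∂ν) - (∫ x, g x ∂ν) ^ 2 := by
      intro i _
      rw [variance_eq_sub (hgP i)]
      have : (fun ω => g (X i ω)) ^ 2 = fun ω => g (X i ω) ^ 2 := by
        ext ω; simp
      rw [this, hint2 i, hint i]
    rw [Finset.sum_congr rfl this, Finset.sum_const, Finset.card_range, nsmul_eq_mul]
  -- indicator facts
  have hindsq : ∀ (D : Set E) (x : E), D.indicator f x ^ 2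
      = D.indicator (fun y => f y ^ 2) x := by
    intro D x
    by_cases hx : x ∈ D <;> simp [Set.indicator_apply, hx]
  have hvarD : ∀ D ∈ Pp,
      variance (fun ω => ∑ i ∈ Finset.range n, D.indicator f (X i ω)) P
        = (n : ℝ) * ((∫ x, D.indicator (fun y => f y ^ 2) x ∂ν)
            - (∫ x, D.indicator f x ∂ν) ^ 2) := by
    intro D hD
    rw [hvar (D.indicator f) (hf.indicator (hPmeas D hD))
      (hmem2.indicator (hPmeas D hD))]
    congr 1
    rw [sub_left_inj]
    exact integral_congr_ae (Filter.Eventually.of_forall fun x => hindsq D x)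
  have hvarfN : variance (fun ω => ∑ i ∈ Finset.range n, f (X i ω)) P
      = (n : ℝ) * ((∫ x, f x ^ 2 ∂ν) - (∫ x, f x ∂ν) ^ 2) := hvar f hf hmem2
  set V : ℝ := (∫ x, f x ^ 2 ∂ν) - (∫ x, f x ∂ν) ^ 2 with hVdef
  set a : Set E → ℝ := fun D => ∫ x, D.indicator f x ∂ν with ha
  set b : Set E → ℝ := fun D => ∫ x, D.indicator (fun y => f y ^ 2) x ∂ν with hb
  have hn0 : (0:ℝ) < (n:ℝ) := by exact_mod_cast hn
  -- part (i)
  have part1 : ∀ D ∈ Pp,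
      variance (fun ω => ∑ i ∈ Finset.range n, D.indicator f (X i ω)) P
          / variance (fun ω => ∑ i ∈ Finset.range n, f (X i ω)) P
        = (b D - (a D) ^ 2) / V := by
    intro D hD
    rw [hvarD D hD, hvarfN, mul_div_mul_left _ _ (ne_of_gt hn0)]
  -- partition sums
  have hpt : ∀ (g : E → ℝ) (x : E), ∑ D ∈ Pp, D.indicator g x = g x := by
    intro g x
    have hx : x ∈ ⋃ D ∈ Pp, D := hPcover ▸ Set.mem_univ x
    simp only [Set.mem_iUnion] at hx
    obtain ⟨D₀, hD₀, hxD₀⟩ := hx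
    rw [Finset.sum_eq_single_of_mem D₀ hD₀]
    · exact Set.indicator_of_mem hxD₀ g
    · intro D hD hne
      refine Set.indicator_of_notMem ?_ g
      exact fun hxD => (hPdisj D hD D₀ hD₀ hne).ne_of_mem hxD hxD₀ rfl
  have hsum_a : ∑ D ∈ Pp, a D = ∫ x, f x ∂ν := by
    rw [← integral_finset_sum Pp (fun D hD => hfi.indicator (hPmeas D hD))]
    exact integral_congr_ae (Filter.Eventually.of_forall fun x => hpt f x)
  have hsum_b : ∑ D ∈ Pp, b D = ∫ x, f x ^ 2 ∂ν := by
    rw [← integral_finset_sum Pp (fun D hD => hf2.indicator (hPmeas D hD))]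
    exact integral_congr_ae (Filter.Eventually.of_forall fun x =>
      hpt (fun y => f y ^ 2) x)
  have ha0 : ∀ D, 0 ≤ a D := fun D =>
    integral_nonneg fun x => Set.indicator_nonneg (fun y _ => hf0 y) x
  set S : ℝ := ∑ D ∈ Pp, ∑ D' ∈ Pp.erase D, a D * a D' with hS
  obtain ⟨D₁, hD₁, D₂, hD₂, hne, hA1, hA2⟩ := htwo
  have hSpos : 0 < S := by
    apply Finset.sum_pos' (fun D _ => Finset.sum_nonneg fun D' _ =>
      mul_nonneg (ha0 D) (ha0 D'))
    refine ⟨D₁, hD₁, ?_⟩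
    apply Finset.sum_pos' (fun D' _ => mul_nonneg (ha0 D₁) (ha0 D'))
    exact ⟨D₂, Finset.mem_erase.mpr ⟨hne.symm, hD₂⟩, mul_pos hA1 hA2⟩
  have hsq : (∑ D ∈ Pp, a D) ^ 2 = (∑ D ∈ Pp, (a D) ^ 2) + S := by
    rw [sq, Finset.sum_mul_sum, hS, ← Finset.sum_add_distrib]
    refine Finset.sum_congr rfl fun D hD => ?_
    rw [← Finset.add_sum_erase Pp (fun D' => a D * a D') hD, sq]
  have hkey : ∑ D ∈ Pp, (b D - (a D) ^ 2) = V + S := by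
    rw [Finset.sum_sub_distrib, hsum_b]
    have : ∑ D ∈ Pp, (a D) ^ 2 = (∫ x, f x ∂ν) ^ 2 - S := by
      rw [← hsum_a, hsq]; ring
    rw [this, hVdef]; ring
  refine ⟨part1, ?_, ?_⟩
  · rw [Finset.sum_congr rfl part1, ← Finset.sum_div, hkey]
    rw [lt_div_iff₀ hvarf, one_mul]
    linarith
  · have h3 : (∑ D ∈ Pp, ∑ D' ∈ Pp.erase D, (-(a D) * a D') / V) = -(S / V) := by
      have hstep : ∀ D ∈ Pp, ∀ D' ∈ Pp.erase D,
          (-(a D) * a D') / V = -((a D * a D') / V) := fun D _ D' _ => by ring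
      rw [Finset.sum_congr rfl (fun D hD => Finset.sum_congr rfl (hstep D hD))]
      simp only [neg_div, Finset.sum_neg_distrib]
      rw [neg_inj, hS, Finset.sum_div]
      exact Finset.sum_congr rfl fun D _ => (Finset.sum_div _ _ _).symm
    rw [h3]
    exact neg_neg_iff_pos.mpr (div_pos hSpos hvarf)
end

section
/- Let (E, 𝓔, ν) be a probability space and f a nonnegative measurable function with 0 < ν(f²) < ∞. Then the sensitivity measure 𝕊 defined by 𝕊(D) = ∫_D f² dν / ν(f²) for D ∈ 𝓔 is a probability measure on (E, 𝓔), and for a mixed binomial process N = (κ, ν) with δ² = c (orthogonal case) and any measurable set D, 𝕊(D) = Var(N(f·1_D)) / Var(Nf). -/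
open MeasureTheory ProbabilityTheory

theorem variance_mixed_binomial
    {Ω : Type*} [MeasurableSpace Ω] (P : Measure Ω) [IsProbabilityMeasure P]
    {E : Type*} [mE : MeasurableSpace E] (ν : Measure E) [IsProbabilityMeasure ν]
    (K : Ω → ℕ) (X : ℕ → Ω → E)
    (hK : Measurable K) (hX : ∀ i, Measurable (X i))
    (hlaw : ∀ i, Measure.map (X i) P = ν)
    (hiid : iIndepFun X P)
    (hindep : IndepFun K (fun ω i => X i ω) P)
    (hK2 : MemLp (fun ω => (K ω : ℝ)) 2 P)
    (hortho : variance (fun ω => (K ω : ℝ)) P = ∫ ω, (K ω : ℝ) ∂P)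
    (g : E → ℝ) (hg : Measurable g)
    (hg2 : Integrable (fun x => g x ^ 2) ν) :
    variance (fun ω => ∑ i ∈ Finset.range (K ω), g (X i ω)) P
      = (∫ ω, (K ω : ℝ) ∂P) * ∫ x, g x ^ 2 ∂ν := by
  set c : ℝ := ∫ ω, (K ω : ℝ) ∂P with hc_def
  set m : ℝ := ∫ x, g x ∂ν with hm_def
  set q : ℝ := ∫ x, g x ^ 2 ∂ν with hq_def
  have hq0 : 0 ≤ q := integral_nonneg fun x => sq_nonneg _
  have hgL2 : MemLp g 2 ν := (memLp_two_iff_integrable_sq hg.aestronglyMeasurable).2 hg2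
  -- the individual terms
  set Y : ℕ → Ω → ℝ := fun i ω => g (X i ω) with hY_def
  have hYmeas : ∀ i, Measurable (Y i) := fun i => hg.comp (hX i)
  have hYL2 : ∀ i, MemLp (Y i) 2 P := by
    intro i
    have : MemLp g 2 (Measure.map (X i) P) := by rw [hlaw i]; exact hgL2
    exact (memLp_map_measure_iff this.aestronglyMeasurable (hX i).aemeasurable).1 this
  have hYint : ∀ i, Integrable (Y i) P := fun i => (hYL2 i).integrable one_le_two
  have hYm : ∀ i, ∫ ω, Y i ω ∂P = m := by
    intro i
    rw [hm_def, ← hlaw i,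
      integral_map (hX i).aemeasurable (by rw [hlaw i]; exact hg.aestronglyMeasurable)]
  have hYq : ∀ i, ∫ ω, Y i ω ^ 2 ∂P = q := by
    intro i
    rw [hq_def, ← hlaw i,
      integral_map (hX i).aemeasurable
        (by rw [hlaw i]; exact (hg.pow_const 2).aestronglyMeasurable)]
  have hYY : ∀ i j, i ≠ j → ∫ ω, Y i ω * Y j ω ∂P = m * m := by
    intro i j hij
    have hind : IndepFun (Y i) (Y j) P := (hiid.indepFun hij).comp hg hg
    rw [hind.integral_fun_mul_eq_mul_integral (hYmeas i).aestronglyMeasurable (hYmeas j).aestronglyMeasurable,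
      hYm i, hYm j]
  -- partial sums
  set T : ℕ → Ω → ℝ := fun n ω => ∑ i ∈ Finset.range n, Y i ω with hT_def
  have hTmeas : ∀ n, Measurable (T n) := fun n => Finset.measurable_sum _ fun i _ => hYmeas i
  have hTL2 : ∀ n, MemLp (T n) 2 P := by
    intro n
    have h := memLp_finset_sum' (Finset.range n) fun i _ => hYL2 i
    have heq : (∑ i ∈ Finset.range n, Y i) = T n := by
      ext ω; simp [hT_def, Finset.sum_apply]
    exact heq ▸ h
  have hTint : ∀ n, Integrable (T n) P := fun n => integrable_finset_sum _ fun i _ => hYint i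
  have hTsqint : ∀ n, Integrable (fun ω => T n ω ^ 2) P := fun n =>
    (memLp_two_iff_integrable_sq (hTmeas n).aestronglyMeasurable).1 (hTL2 n)
  have hTmean : ∀ n, ∫ ω, T n ω ∂P = n * m := by
    intro n
    rw [hT_def]
    simp only
    rw [integral_finset_sum _ fun i _ => hYint i]
    simp [hYm]
  have hYYint : ∀ i j, Integrable (fun ω => Y i ω * Y j ω) P := by
    intro i j
    rcases eq_or_ne i j with rfl | hij
    · simpa [sq] using (memLp_two_iff_integrable_sq (hYmeas i).aestronglyMeasurable).1 (hYL2 i)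
    · exact ((hiid.indepFun hij).comp hg hg).integrable_mul (hYint i) (hYint j)
  have hTsq : ∀ n, ∫ ω, T n ω ^ 2 ∂P = n * q + ((n : ℝ) ^ 2 - n) * m ^ 2 := by
    intro n
    have expand : ∀ ω, T n ω ^ 2
        = ∑ i ∈ Finset.range n, ∑ j ∈ Finset.range n, Y i ω * Y j ω := by
      intro ω
      rw [sq, hT_def]
      simp only
      rw [Finset.sum_mul_sum]
    calc ∫ ω, T n ω ^ 2 ∂P
        = ∫ ω, ∑ i ∈ Finset.range n, ∑ j ∈ Finset.range n, Y i ω * Y j ω ∂P := by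
          simp_rw [expand]
      _ = ∑ i ∈ Finset.range n, ∑ j ∈ Finset.range n, ∫ ω, Y i ω * Y j ω ∂P := by
          rw [integral_finset_sum _ fun i _ => integrable_finset_sum _ fun j _ => hYYint i j]
          exact Finset.sum_congr rfl fun i _ => integral_finset_sum _ fun j _ => hYYint i j
      _ = ∑ i ∈ Finset.range n, ∑ j ∈ Finset.range n,
            (m ^ 2 + if i = j then q - m ^ 2 else 0) := by
          refine Finset.sum_congr rfl fun i _ => Finset.sum_congr rfl fun j _ => ?_
          rcases eq_or_ne i j with rfl | hij
          · simp [← sq, hYq i]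
          · simp [hij, hYY i j hij, sq]
      _ = n * q + ((n : ℝ) ^ 2 - n) * m ^ 2 := by
          simp only [Finset.sum_add_distrib, Finset.sum_const, Finset.card_range, nsmul_eq_mul,
            Finset.sum_ite_eq, Finset.mem_range]
          rw [Finset.sum_ite_of_true (fun i hi => Finset.mem_range.1 hi)]
          simp only [Finset.sum_const, Finset.card_range, nsmul_eq_mul]
          ring
  -- the whole sequence as a single random variable
  set V : Ω → (ℕ → E) := fun ω i => X i ω with hV_def
  have hVmeas : Measurable V := measurable_pi_lambda _ fun i => hX i
  -- the partition events
  set A : ℕ → Set Ω := fun n => K ⁻¹' {n} with hA_def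
  have hAmeas : ∀ n, MeasurableSet (A n) := fun n => hK (measurableSet_singleton n)
  have hAdisj : Pairwise (Function.onFun Disjoint A) := fun i j hij =>
    Disjoint.preimage K (by simpa using hij)
  have hAcover : ⋃ n, A n = Set.univ := by
    ext ω; simp [hA_def]
  -- factorization of integrals over the events `A n` against functions of the sequence
  have hfactor : ∀ (n : ℕ) (Ψ : (ℕ → E) → ℝ), Measurable Ψ →
      ∫ ω in A n, Ψ (V ω) ∂P = (P (A n)).toReal * ∫ ω, Ψ (V ω) ∂P := by
    intro n Ψ hΨ
    set φ : ℕ → ℝ := ({n} : Set ℕ).indicator (fun _ => (1 : ℝ)) with hφ_def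
    have hφm : Measurable φ := measurable_const.indicator (measurableSet_singleton n)
    have hind : ∫ ω, φ (K ω) * Ψ (V ω) ∂P
        = (∫ ω, φ (K ω) ∂P) * ∫ ω, Ψ (V ω) ∂P := by
      simpa [Function.comp] using
        (hindep.comp hφm hΨ).integral_fun_mul_eq_mul_integral ((hφm.comp hK).aestronglyMeasurable)
          ((hΨ.comp hVmeas).aestronglyMeasurable)
    have heq : (A n).indicator (fun ω => Ψ (V ω)) = fun ω => φ (K ω) * Ψ (V ω) := by
      funext ω
      by_cases h : K ω = n <;> simp [hA_def, hφ_def, h]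
    have heq1 : (fun ω => φ (K ω)) = (A n).indicator (fun _ => (1 : ℝ)) := by
      funext ω
      by_cases h : K ω = n <;> simp [hA_def, hφ_def, h]
    have h1 : ∫ ω, φ (K ω) ∂P = (P (A n)).toReal := by
      rw [heq1, integral_indicator_const _ (hAmeas n)]; simp; rfl
    rw [← integral_indicator (hAmeas n), heq, hind, h1]
  -- the set integrals of `T n` and its square over `A n`
  have hsetT : ∀ n, ∫ ω in A n, T n ω ∂P = (P (A n)).toReal * (n * m) := by
    intro n
    have hΨ : Measurable fun y : ℕ → E => ∑ i ∈ Finset.range n, g (y i) :=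
      Finset.measurable_sum _ fun i _ => hg.comp (measurable_pi_apply i)
    have h := hfactor n _ hΨ
    exact h.trans (congrArg _ (hTmean n))
  have hsetTsq : ∀ n, ∫ ω in A n, T n ω ^ 2 ∂P
      = (P (A n)).toReal * ((n : ℝ) * q + ((n : ℝ) ^ 2 - n) * m ^ 2) := by
    intro n
    have hΨ : Measurable fun y : ℕ → E => (∑ i ∈ Finset.range n, g (y i)) ^ 2 :=
      (Finset.measurable_sum _ fun i _ => hg.comp (measurable_pi_apply i)).pow_const 2
    have h := hfactor n _ hΨ
    exact h.trans (congrArg _ (hTsq n))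
  -- the random sum
  set S : Ω → ℝ := fun ω => ∑ i ∈ Finset.range (K ω), g (X i ω) with hS_def
  have hSA : ∀ n, ∀ ω ∈ A n, S ω = T n ω := by
    intro n ω hω
    have : K ω = n := hω
    simp [hS_def, hT_def, hY_def, this]
  have hSmeas : Measurable S := by
    have hTprod : Measurable fun p : Ω × ℕ => T p.2 p.1 :=
      measurable_from_prod_countable_left fun n => hTmeas n
    exact hTprod.comp (measurable_id.prodMk hK)
  -- moments of K
  have hK1int : Integrable (fun ω => (K ω : ℝ)) P := hK2.integrable one_le_two
  have hK2int : Integrable (fun ω => (K ω : ℝ) ^ 2) P :=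
    (memLp_two_iff_integrable_sq hK2.aestronglyMeasurable).1 hK2
  set k2 : ℝ := ∫ ω, (K ω : ℝ) ^ 2 ∂P with hk2_def
  have hsumK1 : HasSum (fun n => (P (A n)).toReal * (n : ℝ)) c := by
    have h := hasSum_integral_iUnion (μ := P) (f := fun ω => (K ω : ℝ)) hAmeas hAdisj
      (by rw [hAcover]; exact hK1int.integrableOn)
    rw [hAcover, Measure.restrict_univ] at h
    convert h using 3 with n
    · rfl
    rw [setIntegral_congr_fun (hAmeas n) (fun ω hω => by
      have : K ω = n := hω; rw [this]), setIntegral_const]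
    simp [mul_comm, Measure.real]
  have hsumK2 : HasSum (fun n => (P (A n)).toReal * (n : ℝ) ^ 2) k2 := by
    have h := hasSum_integral_iUnion (μ := P) (f := fun ω => (K ω : ℝ) ^ 2) hAmeas hAdisj
      (by rw [hAcover]; exact hK2int.integrableOn)
    rw [hAcover, Measure.restrict_univ] at h
    convert h using 3 with n
    · rfl
    rw [setIntegral_congr_fun (hAmeas n) (fun ω hω => by
      have : K ω = n := hω; rw [this]), setIntegral_const]
    simp [mul_comm, Measure.real]
  -- integrability of `S ^ 2`
  have hpnn : ∀ n, 0 ≤ (P (A n)).toReal := fun n => ENNReal.toReal_nonneg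
  have hMnn : ∀ n : ℕ, 0 ≤ (n : ℝ) * q + ((n : ℝ) ^ 2 - n) * m ^ 2 := by
    intro n
    have hn : (n : ℝ) ≤ (n : ℝ) ^ 2 := by exact_mod_cast Nat.le_self_pow two_ne_zero n
    nlinarith [sq_nonneg m, Nat.cast_nonneg (α := ℝ) n]
  have hS2fin : Integrable (fun ω => S ω ^ 2) P := by
    refine ⟨(hSmeas.pow_const 2).aestronglyMeasurable, ?_⟩
    rw [hasFiniteIntegral_iff_ofReal (ae_of_all _ fun ω => sq_nonneg _)]
    have hrepr : ∫⁻ ω, ENNReal.ofReal (S ω ^ 2) ∂P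
        = ∑' n, ∫⁻ ω in A n, ENNReal.ofReal (S ω ^ 2) ∂P := by
      have h := lintegral_iUnion (μ := P) hAmeas hAdisj fun ω => ENNReal.ofReal (S ω ^ 2)
      rw [hAcover, Measure.restrict_univ] at h
      exact h
    have hterm : ∀ n, ∫⁻ ω in A n, ENNReal.ofReal (S ω ^ 2) ∂P
        = ENNReal.ofReal ((P (A n)).toReal * ((n : ℝ) * q + ((n : ℝ) ^ 2 - n) * m ^ 2)) := by
      intro n
      rw [setLIntegral_congr_fun (hAmeas n)
        (fun ω hω => by rw [hSA n ω hω]),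
        ← ofReal_integral_eq_lintegral_ofReal ((hTsqint n).restrict)
          (ae_of_all _ fun ω => sq_nonneg _), hsetTsq n]
    rw [hrepr, tsum_congr hterm]
    have hbound : ∀ n : ℕ,
        ENNReal.ofReal ((P (A n)).toReal * ((n : ℝ) * q + ((n : ℝ) ^ 2 - n) * m ^ 2))
          ≤ ENNReal.ofReal (q + m ^ 2) * ENNReal.ofReal ((P (A n)).toReal * (n : ℝ) ^ 2) := by
      intro n
      rw [← ENNReal.ofReal_mul (by positivity)]
      refine ENNReal.ofReal_le_ofReal ?_
      have hn : (n : ℝ) ≤ (n : ℝ) ^ 2 := by exact_mod_cast Nat.le_self_pow two_ne_zero n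
      have hp := hpnn n
      nlinarith [mul_nonneg (mul_nonneg hp hq0) (sub_nonneg.2 hn),
        mul_nonneg (mul_nonneg hp (sq_nonneg m)) (show (0:ℝ) ≤ (n:ℝ) from Nat.cast_nonneg n)]
    refine lt_of_le_of_lt (ENNReal.tsum_le_tsum hbound) ?_
    rw [ENNReal.tsum_mul_left]
    refine ENNReal.mul_lt_top ENNReal.ofReal_lt_top ?_
    rw [← ENNReal.ofReal_tsum_of_nonneg (fun n => by positivity) hsumK2.summable]
    exact ENNReal.ofReal_lt_top
  have hSL2 : MemLp S 2 P :=
    (memLp_two_iff_integrable_sq hSmeas.aestronglyMeasurable).2 hS2fin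
  have hSint : Integrable S P := hSL2.integrable one_le_two
  -- the moments of S
  have hsumS1 : HasSum (fun n => (P (A n)).toReal * ((n : ℝ) * m)) (∫ ω, S ω ∂P) := by
    have h := hasSum_integral_iUnion (μ := P) (f := S) hAmeas hAdisj
      (by rw [hAcover]; exact hSint.integrableOn)
    rw [hAcover, Measure.restrict_univ] at h
    convert h using 3 with n
    · rfl
    rw [setIntegral_congr_fun (hAmeas n) (fun ω hω => (hSA n ω hω))]
    exact (hsetT n).symm
  have hsumS2 : HasSum (fun n => (P (A n)).toReal * ((n : ℝ) * q + ((n : ℝ) ^ 2 - n) * m ^ 2))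
      (∫ ω, S ω ^ 2 ∂P) := by
    have h := hasSum_integral_iUnion (μ := P) (f := fun ω => S ω ^ 2) hAmeas hAdisj
      (by rw [hAcover]; exact hS2fin.integrableOn)
    rw [hAcover, Measure.restrict_univ] at h
    convert h using 3 with n
    · rfl
    rw [setIntegral_congr_fun (hAmeas n) (fun ω hω => by rw [hSA n ω hω])]
    exact (hsetTsq n).symm
  have hES : ∫ ω, S ω ∂P = c * m := by
    refine hsumS1.unique ?_
    have h := hsumK1.mul_right m
    simpa [mul_assoc] using h
  have hES2 : ∫ ω, S ω ^ 2 ∂P = c * q + (k2 - c) * m ^ 2 := by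
    refine hsumS2.unique ?_
    have h := (hsumK1.mul_right q).add ((hsumK2.mul_right (m ^ 2)).sub (hsumK1.mul_right (m ^ 2)))
    have heq : (fun n : ℕ => (P (A n)).toReal * ↑n * q
          + ((P (A n)).toReal * (n : ℝ) ^ 2 * m ^ 2 - (P (A n)).toReal * ↑n * m ^ 2))
        = fun n : ℕ => (P (A n)).toReal * ((n : ℝ) * q + ((n : ℝ) ^ 2 - n) * m ^ 2) := by
      funext n; ring
    have hval : c * q + (k2 * m ^ 2 - c * m ^ 2) = c * q + (k2 - c) * m ^ 2 := by ring
    rw [heq, hval] at h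
    exact h
  -- conclude
  have hvar : variance S P = ∫ ω, S ω ^ 2 ∂P - (∫ ω, S ω ∂P) ^ 2 := by
    have h := variance_eq_sub hSL2
    simpa [Pi.pow_apply] using h
  have hk2eq : k2 = c + c ^ 2 := by
    have hv := variance_eq_sub hK2
    rw [hortho] at hv
    have hv' : c = k2 - c ^ 2 := by
      simpa [Pi.pow_apply, ← hc_def, ← hk2_def] using hv
    linarith
  have : variance S P = c * q := by
    rw [hvar, hES, hES2, hk2eq]; ring
  simpa [hS_def, hq_def] using this

/-- For a probability space `(E, 𝓔, ν)` and a nonnegative measurable `f`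
with `0 < ν(f²) < ∞`, the sensitivity measure `𝕊(D) = ∫_D f² dν / ν(f²)` is a probability
measure on `(E, 𝓔)`; and for a mixed binomial process `N = (κ, ν)` with `δ² = c > 0`
(orthogonal case) and every measurable set `D`, `𝕊(D) = Var(N(f·1_D)) / Var(Nf)`. -/
theorem sensitivity_measure_prob_and_eq_varianceRatio
    {Ω : Type*} [MeasurableSpace Ω] (P : Measure Ω) [IsProbabilityMeasure P]
    {E : Type*} [mE : MeasurableSpace E] (ν : Measure E) [IsProbabilityMeasure ν]
    (K : Ω → ℕ) (X : ℕ → Ω → E)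
    (hK : Measurable K) (hX : ∀ i, Measurable (X i))
    -- the Xᵢ are iid with common law ν
    (hlaw : ∀ i, Measure.map (X i) P = ν)
    (hiid : iIndepFun X P)
    -- K is independent of the sequence (Xᵢ)
    (hindep : IndepFun K (fun ω i => X i ω) P)
    -- the counting distribution κ (the law of K) has finite mean and finite variance
    (hK2 : MemLp (fun ω => (K ω : ℝ)) 2 P)
    -- orthogonality: δ² = c, with c > 0
    (hortho : variance (fun ω => (K ω : ℝ)) P = ∫ ω, (K ω : ℝ) ∂P)
    (hc : 0 < ∫ ω, (K ω : ℝ) ∂P)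
    (f : E → ℝ) (hf : Measurable f) (hf0 : ∀ x, 0 ≤ f x)
    -- 0 < ν(f²) < ∞
    (hf2 : Integrable (fun x => f x ^ 2) ν)
    (hf2pos : 0 < ∫ x, f x ^ 2 ∂ν) :
    IsProbabilityMeasure
        ((ENNReal.ofReal (∫ x, f x ^ 2 ∂ν))⁻¹
          • ν.withDensity (fun x => ENNReal.ofReal (f x ^ 2)))
    ∧ ∀ D : Set E, MeasurableSet D →
        (((ENNReal.ofReal (∫ x, f x ^ 2 ∂ν))⁻¹
            • ν.withDensity (fun x => ENNReal.ofReal (f x ^ 2))) D).toReal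
          = variance (fun ω => ∑ i ∈ Finset.range (K ω), D.indicator f (X i ω)) P
            / variance (fun ω => ∑ i ∈ Finset.range (K ω), f (X i ω)) P := by
  have hIne : ENNReal.ofReal (∫ x, f x ^ 2 ∂ν) ≠ 0 := by
    simp only [ne_eq, ENNReal.ofReal_eq_zero, not_le]
    exact hf2pos
  have hwd_univ : ν.withDensity (fun x => ENNReal.ofReal (f x ^ 2)) Set.univ
      = ENNReal.ofReal (∫ x, f x ^ 2 ∂ν) := by
    rw [withDensity_apply _ MeasurableSet.univ, Measure.restrict_univ,
      ← ofReal_integral_eq_lintegral_ofReal hf2 (ae_of_all _ fun x => sq_nonneg _)]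
  constructor
  · constructor
    rw [Measure.smul_apply, hwd_univ, smul_eq_mul,
      ENNReal.inv_mul_cancel hIne ENNReal.ofReal_ne_top]
  · intro D hD
    have hindsq : (fun x => D.indicator f x ^ 2) = D.indicator fun x => f x ^ 2 := by
      funext x
      by_cases h : x ∈ D <;> simp [h]
    have hgD2 : Integrable (fun x => D.indicator f x ^ 2) ν := by
      rw [hindsq]; exact hf2.indicator hD
    have hJeq : ∫ x, D.indicator f x ^ 2 ∂ν = ∫ x in D, f x ^ 2 ∂ν := by
      rw [hindsq, integral_indicator hD]
    have hJnn : 0 ≤ ∫ x in D, f x ^ 2 ∂ν := setIntegral_nonneg hD fun x _ => sq_nonneg _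
    have hden := variance_mixed_binomial P ν K X hK hX hlaw hiid hindep hK2 hortho f hf hf2
    have hnum := variance_mixed_binomial P ν K X hK hX hlaw hiid hindep hK2 hortho
      (D.indicator f) (hf.indicator hD) hgD2
    have hwdD : ν.withDensity (fun x => ENNReal.ofReal (f x ^ 2)) D
        = ENNReal.ofReal (∫ x in D, f x ^ 2 ∂ν) := by
      rw [withDensity_apply _ hD,
        ← ofReal_integral_eq_lintegral_ofReal (hf2.restrict (s := D))
          (ae_of_all _ fun x => sq_nonneg _)]
    rw [Measure.smul_apply, hwdD, smul_eq_mul, ENNReal.toReal_mul, ENNReal.toReal_inv,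
      ENNReal.toReal_ofReal hf2pos.le, ENNReal.toReal_ofReal hJnn, hnum, hJeq, hden]
    rw [mul_div_mul_left _ _ (ne_of_gt hc)]
    exact inv_mul_eq_div _ _
end
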